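/- Call a partition $\lambda = a_1^{e_1}\cdots a_k^{e_k}$ of an even integer $n$ into $d = \sum e_i$ parts 'special' if all part sizes $a_i$ are odd, all multiplicities $e_i$ are even, and $\frac{d!}{e_1!\cdots e_k!}$ is odd. Suppose rational numbers $a_\lambda$, indexed by partitions $\lambda$ of $n$ into exactly $d$ parts, satisfy $\sum_\lambda a_\lambda \prod_{i=1}^{k(\lambda)} \frac{(z^{a_i}-1)^{e_i}}{e_i!} = 0$ in $\mathbb{Q}[z]$, and that all $a_\lambda$ are integers. Then $\sum_{\lambda \text{ special}} a_\lambda \equiv 0 \pmod 2$. -/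

import Mathlib

open Polynomial

open scoped Classical

/-- The multinomial coefficient `d!/(e_1! ⋯ e_k!)` of a partition with `d` parts,
where the `e_a` are the multiplicities of the distinct part sizes `a`. -/
def partMultinomial {n : ℕ} (lam : Nat.Partition n) : ℕ :=
  Nat.factorial lam.parts.card /
    ∏ a ∈ lam.parts.toFinset, Nat.factorial (lam.parts.count a)

/-- A partition of an even `n` into `d` parts is special if all part sizes are odd,
all multiplicities are even, and its multinomial coefficient `d!/(e_1!⋯e_k!)` is odd. -/
def IsSpecial {n : ℕ} (lam : Nat.Partition n) : Prop :=
  (∀ a ∈ lam.parts.toFinset, Odd a) ∧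
  (∀ a ∈ lam.parts.toFinset, Even (lam.parts.count a)) ∧
  Odd (partMultinomial lam)

/-- The polynomial `∏_i (z^{a_i}-1)^{e_i}/e_i!` attached to a partition
`λ = a_1^{e_1} ⋯ a_k^{e_k}`. -/
noncomputable def partPoly {n : ℕ} (lam : Nat.Partition n) : ℚ[X] :=
  ∏ a ∈ lam.parts.toFinset,
    C ((1 : ℚ) / Nat.factorial (lam.parts.count a)) * (X ^ a - 1) ^ lam.parts.count a

/-! ### Auxiliary material -/

/-- The polynomial `((X+1)^a - 1)/X = ∑_{i<a} (X+1)^i`. -/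
noncomputable def auxG (a : ℕ) : ℚ[X] := ∑ i ∈ Finset.range a, (X + 1) ^ i

lemma X_mul_auxG (a : ℕ) : X * auxG a = (X + 1) ^ a - 1 := by
  have h := geom_sum_mul (X + 1 : ℚ[X]) a
  simpa [auxG, mul_comm] using h

lemma auxG_eval_zero (a : ℕ) : (auxG a).eval 0 = a := by
  simp [auxG, eval_finset_sum]

lemma odd_prod {α : Type*} (s : Finset α) (f : α → ℕ) :
    Odd (∏ i ∈ s, f i) ↔ ∀ i ∈ s, Odd (f i) := by
  classical
  induction s using Finset.induction_on with
  | empty => simp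
  | insert _ _ h ih =>
    rw [Finset.prod_insert h, Nat.odd_mul, ih, Finset.forall_mem_insert]

lemma partMultinomial_eq {n : ℕ} (lam : Nat.Partition n) :
    partMultinomial lam = Nat.multinomial lam.parts.toFinset (lam.parts.count ·) := by
  rw [partMultinomial, Nat.multinomial, Multiset.toFinset_sum_count_eq]

/-- The integer `mult(λ) * ∏ a_i^{e_i}`. -/
def auxT {n : ℕ} (lam : Nat.Partition n) : ℕ :=
  Nat.multinomial lam.parts.toFinset (lam.parts.count ·) *
    ∏ a ∈ lam.parts.toFinset, a ^ lam.parts.count a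

/-- `C(d,e)` is even when `d` is even and `e` is odd. -/
lemma even_choose_of_even_of_odd {d e : ℕ} (hd : Even d) (he : Odd e) (hed : e ≤ d) :
    2 ∣ d.choose e := by
  rcases he with ⟨k, hk⟩
  have hd1 : 1 ≤ d := by omega
  have h := Nat.add_one_mul_choose_eq (d - 1) (2 * k)
  have hsd : d - 1 + 1 = d := by omega
  simp only [Nat.succ_eq_add_one, hsd] at h
  have h2 : 2 ∣ d.choose e * e := by
    rw [hk, ← h]
    exact (hd.two_dvd).mul_right _
  rcases (Nat.Prime.dvd_mul Nat.prime_two).mp h2 with h' | h'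
  · exact h'
  · omega

lemma auxT_odd_iff {n : ℕ} (hn : Even n) (lam : Nat.Partition n) :
    Odd (auxT lam) ↔ IsSpecial lam := by
  rw [auxT, Nat.odd_mul, odd_prod, IsSpecial, partMultinomial_eq]
  constructor
  · rintro ⟨hm, hp⟩
    have hodda : ∀ a ∈ lam.parts.toFinset, Odd a := by
      intro a ha
      have hpa := hp a ha
      have hc : lam.parts.count a ≠ 0 :=
        Multiset.count_ne_zero.mpr (Multiset.mem_toFinset.mp ha)
      rcases Nat.even_or_odd a with he | ho
      · exfalso
        have : Even (a ^ lam.parts.count a) := Nat.even_pow.mpr ⟨he, hc⟩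
        rw [Nat.even_iff] at this
        rw [Nat.odd_iff] at hpa
        omega
      · exact ho
    have h2z : (2 : ZMod 2) = 0 := by decide
    have hcard : Even lam.parts.card := by
      have h1 : ((lam.parts.card : ℕ) : ZMod 2) = 0 := by
        have hmap : lam.parts.map (fun x : ℕ => ((x : ℕ) : ZMod 2)) =
            lam.parts.map (fun _ => (1 : ZMod 2)) := by
          refine Multiset.map_congr rfl fun x hx => ?_
          obtain ⟨k, hk⟩ := hodda x (Multiset.mem_toFinset.mpr hx)
          subst hk
          push_cast
          rw [h2z]; ring
        have hsum : ((n : ℕ) : ZMod 2) = ((lam.parts.card : ℕ) : ZMod 2) := by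
          rw [← congrArg (fun m : ℕ => ((m : ℕ) : ZMod 2)) lam.parts_sum]
          rw [Nat.cast_multiset_sum, hmap, Multiset.map_const',
            Multiset.sum_replicate, nsmul_eq_mul, mul_one]
        exact hsum ▸ (ZMod.natCast_eq_zero_iff n 2).mpr hn.two_dvd
      have := (ZMod.natCast_eq_zero_iff lam.parts.card 2).mp h1
      obtain ⟨k, hk⟩ := this
      exact ⟨k, by omega⟩
    refine ⟨hodda, ?_, hm⟩
    intro a ha
    by_contra hcount
    have hodd_e : Odd (lam.parts.count a) := by
      rcases Nat.even_or_odd (lam.parts.count a) with h | h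
      · exact absurd h hcount
      · exact h
    have hle : lam.parts.count a ≤ lam.parts.card := Multiset.count_le_card _ _
    have hch : 2 ∣ (lam.parts.card).choose (lam.parts.count a) :=
      even_choose_of_even_of_odd hcard hodd_e hle
    have hdvd : (lam.parts.card).choose (lam.parts.count a) ∣
        Nat.multinomial lam.parts.toFinset (lam.parts.count ·) := by
      have hnot : a ∉ lam.parts.toFinset.erase a := Finset.notMem_erase a _
      have hins := Nat.multinomial_insert hnot (lam.parts.count ·)
      rw [Finset.insert_erase ha] at hins
      have hsum := Finset.add_sum_erase lam.parts.toFinset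
        (fun i => lam.parts.count i) ha
      rw [Multiset.toFinset_sum_count_eq] at hsum
      rw [hsum] at hins
      exact Dvd.intro _ hins.symm
    have h2m : 2 ∣ Nat.multinomial lam.parts.toFinset (lam.parts.count ·) :=
      hch.trans hdvd
    rw [Nat.odd_iff] at hm
    omega
  · rintro ⟨h1, _h2, h3⟩
    exact ⟨h3, fun a ha => (h1 a ha).pow⟩

theorem stmt_10 (n d : ℕ) (hn : Even n) (hn0 : 0 < n) (coeff : Nat.Partition n → ℤ)
    (hrel : ∑ lam ∈ Finset.univ.filter (fun lam : Nat.Partition n => lam.parts.card = d),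
        C ((coeff lam : ℚ)) * partPoly lam = 0) :
    2 ∣ ∑ lam ∈ Finset.univ.filter
        (fun lam : Nat.Partition n => lam.parts.card = d ∧ IsSpecial lam), coeff lam := by
  classical
  -- coefficient of `X^d` in `aeval (X+1) (partPoly lam)`
  have key : ∀ lam : Nat.Partition n, lam.parts.card = d →
      ((aeval (X + 1 : ℚ[X])) (partPoly lam)).coeff d =
        ∏ a ∈ lam.parts.toFinset,
          (1 / (Nat.factorial (lam.parts.count a) : ℚ)) * (a : ℚ) ^ lam.parts.count a := by
    intro lam hcard
    have h1 : (aeval (X + 1 : ℚ[X])) (partPoly lam) =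
        X ^ d * ∏ a ∈ lam.parts.toFinset,
          C ((1 : ℚ) / Nat.factorial (lam.parts.count a)) * (auxG a) ^ lam.parts.count a := by
      rw [partPoly, map_prod, ← hcard, ← Multiset.toFinset_sum_count_eq lam.parts,
        ← Finset.prod_pow_eq_pow_sum, ← Finset.prod_mul_distrib]
      refine Finset.prod_congr rfl fun a _ => ?_
      rw [map_mul, map_pow, map_sub, map_pow, aeval_X, map_one, ← X_mul_auxG, aeval_C,
        Polynomial.algebraMap_eq, mul_pow]
      ring
    rw [h1]
    have h2 := coeff_X_pow_mul (∏ a ∈ lam.parts.toFinset,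
      C ((1 : ℚ) / Nat.factorial (lam.parts.count a)) * (auxG a) ^ lam.parts.count a) d 0
    rw [zero_add] at h2
    rw [h2, coeff_zero_eq_eval_zero, eval_prod]
    refine Finset.prod_congr rfl fun a _ => ?_
    rw [eval_mul, eval_pow, eval_C, auxG_eval_zero]
  -- the coefficient-extracted relation over ℚ
  have hstep : ∑ lam ∈ Finset.univ.filter (fun lam : Nat.Partition n => lam.parts.card = d),
      (coeff lam : ℚ) * ∏ a ∈ lam.parts.toFinset,
        (1 / (Nat.factorial (lam.parts.count a) : ℚ)) * (a : ℚ) ^ lam.parts.count a = 0 := by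
    have h := congrArg (fun p : ℚ[X] => ((aeval (X + 1 : ℚ[X])) p).coeff d) hrel
    simp only [map_sum, map_mul, aeval_C, Polynomial.algebraMap_eq, map_zero, coeff_zero,
      finset_sum_coeff, coeff_C_mul] at h
    rw [← h]
    exact Finset.sum_congr rfl fun lam hlam => by
      rw [key lam (Finset.mem_filter.mp hlam).2]
  -- multiplying by `d!` gives `auxT`
  have hT : ∀ lam : Nat.Partition n, lam.parts.card = d →
      (Nat.factorial d : ℚ) * ∏ a ∈ lam.parts.toFinset,
        (1 / (Nat.factorial (lam.parts.count a) : ℚ)) * (a : ℚ) ^ lam.parts.count a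
        = (auxT lam : ℚ) := by
    intro lam hcard
    have hspec := Nat.multinomial_spec lam.parts.toFinset (lam.parts.count ·)
    rw [Multiset.toFinset_sum_count_eq, hcard] at hspec
    have hcast : ((∏ a ∈ lam.parts.toFinset, Nat.factorial (lam.parts.count a) : ℕ) : ℚ) *
        (Nat.multinomial lam.parts.toFinset (lam.parts.count ·) : ℚ)
          = (Nat.factorial d : ℚ) := by
      exact_mod_cast congrArg (Nat.cast : ℕ → ℚ) hspec
    have hprodne : ((∏ a ∈ lam.parts.toFinset, Nat.factorial (lam.parts.count a) : ℕ) : ℚ) ≠ 0 := by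
      push_cast
      exact Finset.prod_ne_zero_iff.mpr fun a _ => by
        exact_mod_cast Nat.factorial_ne_zero _
    rw [Finset.prod_mul_distrib, auxT, ← hcast]
    push_cast
    field_simp
    simp only [one_div, Finset.prod_inv_distrib]
    push_cast at hprodne
    field_simp
  -- the integer relation
  have hint : ∑ lam ∈ Finset.univ.filter (fun lam : Nat.Partition n => lam.parts.card = d),
      coeff lam * (auxT lam : ℤ) = 0 := by
    have h := congrArg (fun x : ℚ => (Nat.factorial d : ℚ) * x) hstep
    simp only [mul_zero, Finset.mul_sum] at h
    have h2 : ∑ lam ∈ Finset.univ.filter (fun lam : Nat.Partition n => lam.parts.card = d),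
        (coeff lam : ℚ) * (auxT lam : ℚ) = 0 := by
      rw [← h]
      refine Finset.sum_congr rfl fun lam hlam => ?_
      rw [← hT lam (Finset.mem_filter.mp hlam).2]
      ring
    exact_mod_cast h2
  -- pass to `ZMod 2`
  have hzm := congrArg (fun x : ℤ => (x : ZMod 2)) hint
  push_cast at hzm
  have hval : ∀ lam : Nat.Partition n,
      ((auxT lam : ℕ) : ZMod 2) = if IsSpecial lam then 1 else 0 := by
    intro lam
    by_cases hs : IsSpecial lam
    · obtain ⟨k, hk⟩ := (auxT_odd_iff hn lam).mpr hs
      rw [hk, if_pos hs]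
      push_cast
      have h2z : (2 : ZMod 2) = 0 := by decide
      rw [h2z]; ring
    · rw [if_neg hs]
      have heven : 2 ∣ auxT lam := by
        rcases Nat.even_or_odd (auxT lam) with h | h
        · exact h.two_dvd
        · exact absurd ((auxT_odd_iff hn lam).mp h) hs
      exact (ZMod.natCast_eq_zero_iff _ 2).mpr heven
  have hfin : ((∑ lam ∈ Finset.univ.filter
      (fun lam : Nat.Partition n => lam.parts.card = d ∧ IsSpecial lam), coeff lam : ℤ) :
        ZMod 2) = 0 := by
    push_cast
    rw [← Finset.filter_filter, Finset.sum_filter]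
    refine Eq.trans ?_ hzm
    refine Finset.sum_congr rfl fun lam _ => ?_
    rw [hval lam]
    by_cases hs : IsSpecial lam <;> simp [hs]
  have hfin2 := (ZMod.intCast_zmod_eq_zero_iff_dvd _ 2).mp hfin
  exact_mod_cast hfin2
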